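/- For any k > 0, the class of k-locally testable groups is closed under taking finite direct products: if G and H are groups each admitting a finite symmetric generating set whose language of geodesic words is k-locally testable, then G × H admits a finite symmetric generating set whose language of geodesic words is k-locally testable. -/

import Mathlib

/-- `pre_{k-1}`, `suf_{k-1}` and `sub_k` agree: the equivalence `∼_k` on words. -/
def SimK {A : Type*} (k : ℕ) (u v : List A) : Prop :=
  u.take (k - 1) = v.take (k - 1) ∧
  u.drop (u.length - (k - 1)) = v.drop (v.length - (k - 1)) ∧
  ∀ s : List A, s.length = k → (s <:+: u ↔ s <:+: v)

/-- A language `L` is `k`-locally testable if membership is invariant under `∼_k`. -/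
def LocallyTestable {A : Type*} (k : ℕ) (L : Set (List A)) : Prop :=
  ∀ u v : List A, SimK k u v → (u ∈ L ↔ v ∈ L)

/-- The syntactic congruence of a language: `u ∼_L v` iff `sut ∈ L ↔ svt ∈ L` for all `s, t`. -/
def SynCong {A : Type*} (L : Set (List A)) (u v : List A) : Prop :=
  ∀ s t : List A, s ++ u ++ t ∈ L ↔ s ++ v ++ t ∈ L

/-- The element of `G` represented by a word over the generating set `X`. -/
def wordProd {G : Type*} [Group G] {X : Set G} (w : List X) : G :=
  (w.map Subtype.val).prod

/-- A word over `X` is geodesic if no word representing the same element is shorter. -/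
def IsGeodesic {G : Type*} [Group G] (X : Set G) (w : List X) : Prop :=
  ∀ v : List X, wordProd v = wordProd w → w.length ≤ v.length

/-- The language of all geodesic words over `X`. -/
def Geo {G : Type*} [Group G] (X : Set G) : Set (List X) :=
  {w | IsGeodesic X w}

/-- The `j`-th power of a word in the free monoid (concatenation of `j` copies). -/
def listPow {A : Type*} (w : List A) : ℕ → List A
  | 0 => []
  | n + 1 => w ++ listPow w n

/-! ### Auxiliary lemmas -/

section SimKLemmas

variable {A B : Type*}

lemma SimK.symm {k : ℕ} {u v : List A} (h : SimK k u v) : SimK k v u :=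
  ⟨h.1.symm, h.2.1.symm, fun s hs => (h.2.2 s hs).symm⟩

lemma infix_map (f : A → B) {s : List B} {l : List A} (h : s <:+: l.map f) :
    ∃ t, t <:+: l ∧ s = t.map f := by
  obtain ⟨p, q, hpq⟩ := h
  have h1 : List.map f l = p ++ s ++ q := hpq.symm
  obtain ⟨l1, l2, rfl, h2, h3⟩ := List.map_eq_append_iff.mp h1
  obtain ⟨l3, l4, rfl, h4, h5⟩ := List.map_eq_append_iff.mp h2
  exact ⟨l4, ⟨l3, l2, by simp⟩, h5.symm⟩

lemma SimK.map_letter (f : A → B) {k : ℕ} {u v : List A} (h : SimK k u v) :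
    SimK k (u.map f) (v.map f) := by
  obtain ⟨h1, h2, h3⟩ := h
  refine ⟨?_, ?_, ?_⟩
  · rw [← List.map_take, ← List.map_take, h1]
  · rw [List.length_map, List.length_map, ← List.map_drop, ← List.map_drop, h2]
  · intro s hs
    constructor
    · intro hsu
      obtain ⟨t, ht, rfl⟩ := infix_map f hsu
      have hts : t.length = k := by simpa using hs
      exact ((h3 t hts).mp ht).map f
    · intro hsv
      obtain ⟨t, ht, rfl⟩ := infix_map f hsv
      have hts : t.length = k := by simpa using hs
      exact ((h3 t hts).mpr ht).map f

lemma simK_of_map {f : A → B} (hf : Function.Injective f) {k : ℕ} {u v : List A}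
    (h : SimK k (u.map f) (v.map f)) : SimK k u v := by
  obtain ⟨h1, h2, h3⟩ := h
  have hinj : Function.Injective (List.map f) := List.map_injective_iff.mpr hf
  refine ⟨hinj ?_, hinj ?_, ?_⟩
  · rw [List.map_take, List.map_take]; exact h1
  · rw [List.map_drop, List.map_drop]
    simpa [List.length_map] using h2
  · intro s hs
    constructor
    · intro hsu
      have hin := (h3 (s.map f) (by simp [hs])).mp (hsu.map f)
      obtain ⟨t, ht, hts⟩ := infix_map f hin
      rwa [hinj hts]
    · intro hsv
      have hin := (h3 (s.map f) (by simp [hs])).mpr (hsv.map f)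
      obtain ⟨t, ht, hts⟩ := infix_map f hin
      rwa [hinj hts]

lemma simk_cases {k : ℕ} (hk : 0 < k) {u v : List A} (h : SimK k u v) :
    u = v ∨ (k ≤ u.length ∧ k ≤ v.length) := by
  obtain ⟨h1, h2, h3⟩ := h
  by_cases hu : k ≤ u.length
  · right
    refine ⟨hu, ?_⟩
    have hin : u.take k <:+: v :=
      (h3 _ (by rw [List.length_take]; omega)).mp (u.take_prefix k).isInfix
    have := hin.length_le
    rw [List.length_take] at this; omega
  · push_neg at hu
    by_cases hv : k ≤ v.length
    · exfalso
      have hin : v.take k <:+: u :=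
        (h3 _ (by rw [List.length_take]; omega)).mpr (v.take_prefix k).isInfix
      have := hin.length_le
      rw [List.length_take] at this; omega
    · push_neg at hv
      left
      calc u = u.take (k - 1) := (List.take_of_length_le (by omega)).symm
        _ = v.take (k - 1) := h1
        _ = v := List.take_of_length_le (by omega)

lemma mem_window {k : ℕ} (hk : 0 < k) {u : List A} (hku : k ≤ u.length) {a : A} (ha : a ∈ u) :
    ∃ s : List A, s.length = k ∧ s <:+: u ∧ a ∈ s := by
  obtain ⟨p, q, rfl⟩ := List.append_of_mem ha
  by_cases hq : k - 1 ≤ q.length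
  · refine ⟨a :: q.take (k - 1), by simp; omega, ⟨p, q.drop (k - 1), ?_⟩,
      List.mem_cons_self⟩
    simp [List.take_append_drop]
  · push_neg at hq
    refine ⟨(p ++ a :: q).drop ((p ++ a :: q).length - k), ?_,
      (List.drop_suffix _ _).isInfix, ?_⟩
    · rw [List.length_drop]; omega
    · have h0 : (p ++ a :: q).length - k - p.length = 0 := by simp; omega
      rw [List.drop_append, h0, List.drop_zero]
      exact List.mem_append_right _ List.mem_cons_self

lemma mem_of_simk {k : ℕ} (hk : 0 < k) {u v : List A} (h : SimK k u v) {a : A}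
    (ha : a ∈ u) : a ∈ v := by
  rcases simk_cases hk h with rfl | ⟨hu, _⟩
  · exact ha
  · obtain ⟨s, hs, hsu, has⟩ := mem_window hk hu ha
    exact ((h.2.2 s hs).mp hsu).subset has

end SimKLemmas

section OneGroup

variable {G : Type*} [Group G] (X : Set G)

lemma wordProd_nil : wordProd ([] : List X) = 1 := rfl

lemma wordProd_cons (x : X) (w : List X) : wordProd (x :: w) = (x : G) * wordProd w := by
  simp [wordProd]

lemma wordProd_append (u v : List X) : wordProd (u ++ v) = wordProd u * wordProd v := by
  simp [wordProd]

/-- Embedding of `X`-words into `(insert 1 X)`-words. -/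
def emb (x : X) : (insert (1 : G) X : Set G) := ⟨x.1, Set.mem_insert_of_mem _ x.2⟩

open scoped Classical in
/-- Removing the letters equal to `1` and recording membership in `X`. -/
noncomputable def clean (w : List (insert (1 : G) X : Set G)) : List X :=
  w.filterMap fun z : (insert (1 : G) X : Set G) =>
    if h : (z : G) ∈ X then some (⟨(z : G), h⟩ : X) else none

lemma wordProd_clean (w : List (insert (1 : G) X : Set G)) :
    wordProd (clean X w) = wordProd w := by
  induction w with
  | nil => rfl
  | cons z w ih =>
    rw [wordProd_cons]
    by_cases h : (z : G) ∈ X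
    · rw [show clean X (z :: w) = ⟨z, h⟩ :: clean X w from by
        simp [clean, List.filterMap_cons, h], wordProd_cons, ih]
    · have hz1 : (z : G) = 1 := by
        rcases Set.mem_insert_iff.mp z.2 with h1 | h2
        · exact h1
        · exact absurd h2 h
      rw [show clean X (z :: w) = clean X w from by
        simp [clean, List.filterMap_cons, h], ih, hz1, one_mul]

lemma length_clean_le (w : List (insert (1 : G) X : Set G)) :
    (clean X w).length ≤ w.length := by
  unfold clean; exact List.length_filterMap_le _ _

lemma map_emb_clean {w : List (insert (1 : G) X : Set G)} (h : ∀ z ∈ w, (z : G) ≠ 1) :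
    (clean X w).map (emb X) = w := by
  induction w with
  | nil => rfl
  | cons z w ih =>
    have hz : (z : G) ∈ X := by
      rcases Set.mem_insert_iff.mp z.2 with h1 | h2
      · exact absurd h1 (h z List.mem_cons_self)
      · exact h2
    rw [show clean X (z :: w) = ⟨z, hz⟩ :: clean X w from by
      simp [clean, List.filterMap_cons, hz]]
    rw [List.map_cons, ih fun a ha => h a (List.mem_cons_of_mem _ ha)]
    congr 1

lemma wordProd_map_emb (w : List X) : wordProd (w.map (emb X)) = wordProd w := by
  simp [wordProd, List.map_map, emb, Function.comp]

lemma emb_injective : Function.Injective (emb X) := by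
  intro a b h
  have h2 := congrArg Subtype.val h
  exact Subtype.ext h2

lemma geo_map_emb_iff (w : List X) :
    w.map (emb X) ∈ Geo (insert (1 : G) X) ↔ w ∈ Geo X := by
  constructor
  · intro hg v0 hv0
    have hprod : wordProd (v0.map (emb X)) = wordProd (w.map (emb X)) := by
      rw [wordProd_map_emb, wordProd_map_emb, hv0]
    have := hg _ hprod
    simpa using this
  · intro hg v hv
    have h1 : wordProd (clean X v) = wordProd w := by
      rw [wordProd_clean, hv, wordProd_map_emb]
    have h2 := hg _ h1
    calc (w.map (emb X)).length = w.length := by simp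
      _ ≤ (clean X v).length := h2
      _ ≤ v.length := length_clean_le X v

lemma not_geo_of_one {w : List (insert (1 : G) X : Set G)} {z} (hz : z ∈ w)
    (h1 : (z : G) = 1) : w ∉ Geo (insert (1 : G) X) := by
  obtain ⟨p, q, rfl⟩ := List.append_of_mem hz
  intro hg
  have hpq : wordProd (p ++ q) = wordProd (p ++ z :: q) := by
    rw [wordProd_append, wordProd_append, wordProd_cons, h1, one_mul]
  have := hg _ hpq
  simp at this

lemma lt_insert {k : ℕ} (hk : 0 < k) (hLT : LocallyTestable k (Geo X)) :
    LocallyTestable k (Geo (insert (1 : G) X)) := by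
  intro u v huv
  by_cases hu : ∃ z ∈ u, (z : G) = 1
  · obtain ⟨z, hz, h1⟩ := hu
    exact iff_of_false (not_geo_of_one X hz h1)
      (not_geo_of_one X (mem_of_simk hk huv hz) h1)
  · push_neg at hu
    have hv : ∀ z ∈ v, (z : G) ≠ 1 := fun z hz h1 =>
      hu z (mem_of_simk hk huv.symm hz) h1
    have hu' := map_emb_clean X hu
    have hv' := map_emb_clean X hv
    have hsim : SimK k (clean X u) (clean X v) := by
      apply simK_of_map (emb_injective X)
      rw [hu', hv']; exact huv
    rw [← hu', ← hv', geo_map_emb_iff, geo_map_emb_iff]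
    exact hLT _ _ hsim

end OneGroup

section Product

variable {G H : Type*} [Group G] [Group H] (X : Set G) (Y : Set H)

/-- The product generating set. -/
def PZ : Set (G × H) := (insert (1 : G) X) ×ˢ (insert (1 : H) Y)

/-- Projection of a letter to the first coordinate. -/
def pg (z : PZ X Y) : (insert (1 : G) X : Set G) := ⟨z.1.1, z.2.1⟩

/-- Projection of a letter to the second coordinate. -/
def ph (z : PZ X Y) : (insert (1 : H) Y : Set H) := ⟨z.1.2, z.2.2⟩

lemma wordProd_pg (w : List (PZ X Y)) :
    wordProd (w.map (pg X Y)) = (wordProd w).1 := by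
  unfold wordProd
  rw [List.map_map,
    show (Subtype.val ∘ pg X Y) = (⇑(MonoidHom.fst G H) ∘ Subtype.val) from rfl,
    ← List.map_map, List.prod_hom]
  rfl

lemma wordProd_ph (w : List (PZ X Y)) :
    wordProd (w.map (ph X Y)) = (wordProd w).2 := by
  unfold wordProd
  rw [List.map_map,
    show (Subtype.val ∘ ph X Y) = (⇑(MonoidHom.snd G H) ∘ Subtype.val) from rfl,
    ← List.map_map, List.prod_hom]
  rfl

lemma exists_pair :
    ∀ (a : List (insert (1 : G) X : Set G)) (b : List (insert (1 : H) Y : Set H)),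
      a.length = b.length →
      ∃ c : List (PZ X Y), c.length = a.length ∧ wordProd c = (wordProd a, wordProd b) := by
  intro a
  induction a with
  | nil =>
    intro b hb
    have : b = [] := List.eq_nil_of_length_eq_zero hb.symm
    subst this
    exact ⟨[], rfl, by simp [wordProd]; rfl⟩
  | cons x a ih =>
    intro b hb
    cases b with
    | nil => simp at hb
    | cons y b' =>
      obtain ⟨c, hc1, hc2⟩ := ih b' (by simpa using hb)
      refine ⟨⟨((x : G), (y : H)), Set.mem_prod.mpr ⟨x.2, y.2⟩⟩ :: c, by simp [hc1], ?_⟩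
      rw [wordProd_cons, hc2, wordProd_cons, wordProd_cons]
      rfl

lemma wordProd_pad (a : List (insert (1 : G) X : Set G)) (n : ℕ) :
    wordProd (a ++ List.replicate n ⟨1, Set.mem_insert _ _⟩) = wordProd a := by
  rw [wordProd_append]
  have h1 : wordProd (List.replicate n
      (⟨1, Set.mem_insert _ _⟩ : (insert (1 : G) X : Set G))) = 1 := by
    unfold wordProd
    rw [List.map_replicate, List.prod_replicate]
    exact one_pow n
  rw [h1, mul_one]

lemma geo_PZ_iff (w : List (PZ X Y)) :
    w ∈ Geo (PZ X Y) ↔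
      (w.map (pg X Y) ∈ Geo (insert (1 : G) X) ∨ w.map (ph X Y) ∈ Geo (insert (1 : H) Y)) := by
  constructor
  · intro hw
    by_contra hcon
    push_neg at hcon
    obtain ⟨h1, h2⟩ := hcon
    simp only [Geo, Set.mem_setOf_eq, IsGeodesic] at h1 h2
    push_neg at h1 h2
    obtain ⟨a, ha, hal⟩ := h1
    obtain ⟨b, hb, hbl⟩ := h2
    set m := max a.length b.length with hm
    set a' := a ++ List.replicate (m - a.length)
      (⟨1, Set.mem_insert _ _⟩ : (insert (1 : G) X : Set G)) with ha'
    set b' := b ++ List.replicate (m - b.length)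
      (⟨1, Set.mem_insert _ _⟩ : (insert (1 : H) Y : Set H)) with hb'
    have hla : a'.length = m := by simp [ha']; omega
    have hlb : b'.length = m := by simp [hb']; omega
    obtain ⟨c, hc1, hc2⟩ := exists_pair X Y a' b' (by rw [hla, hlb])
    have hcprod : wordProd c = wordProd w := by
      rw [hc2, ha', hb', wordProd_pad, wordProd_pad, ha, hb, wordProd_pg, wordProd_ph]
    have hlen := hw c hcprod
    rw [hc1, hla] at hlen
    rw [List.length_map] at hal hbl
    omega
  · rintro (h | h) v hv
    · have hpr : wordProd (v.map (pg X Y)) = wordProd (w.map (pg X Y)) := by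
        rw [wordProd_pg, wordProd_pg, hv]
      have := h _ hpr
      simpa using this
    · have hpr : wordProd (v.map (ph X Y)) = wordProd (w.map (ph X Y)) := by
        rw [wordProd_ph, wordProd_ph, hv]
      have := h _ hpr
      simpa using this

end Product

/-- The class of `k`-locally testable groups is closed under finite direct products. -/
theorem stmt4 (k : ℕ) (hk : 0 < k) {G H : Type*} [Group G] [Group H]
    (hG : ∃ X : Set G, X.Finite ∧ (∀ x ∈ X, x⁻¹ ∈ X) ∧ Subgroup.closure X = ⊤ ∧
      LocallyTestable k (Geo X))
    (hH : ∃ Y : Set H, Y.Finite ∧ (∀ y ∈ Y, y⁻¹ ∈ Y) ∧ Subgroup.closure Y = ⊤ ∧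
      LocallyTestable k (Geo Y)) :
    ∃ Z : Set (G × H), Z.Finite ∧ (∀ z ∈ Z, z⁻¹ ∈ Z) ∧ Subgroup.closure Z = ⊤ ∧
      LocallyTestable k (Geo Z) := by
  obtain ⟨X, hXf, hXs, hXc, hXl⟩ := hG
  obtain ⟨Y, hYf, hYs, hYc, hYl⟩ := hH
  refine ⟨PZ X Y, ?_, ?_, ?_, ?_⟩
  · exact (hXf.insert 1).prod (hYf.insert 1)
  · rintro ⟨a, b⟩ hz
    rw [PZ, Set.mem_prod] at hz
    refine Set.mem_prod.mpr ⟨?_, ?_⟩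
    · rcases Set.mem_insert_iff.mp hz.1 with h1 | h1
      · have h1' : a = 1 := h1
        simp [h1']
      · exact Set.mem_insert_of_mem _ (hXs _ h1)
    · rcases Set.mem_insert_iff.mp hz.2 with h1 | h1
      · have h1' : b = 1 := h1
        simp [h1']
      · exact Set.mem_insert_of_mem _ (hYs _ h1)
  · rw [eq_top_iff]
    rintro ⟨g, h⟩ -
    have hg1 : ((g, (1 : H)) : G × H) ∈ Subgroup.closure (PZ X Y) := by
      have hgX : g ∈ Subgroup.closure X := by rw [hXc]; trivial
      have h2 : (MonoidHom.inl G H) g ∈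
          Subgroup.map (MonoidHom.inl G H) (Subgroup.closure X) := ⟨g, hgX, rfl⟩
      rw [MonoidHom.map_closure] at h2
      refine Subgroup.closure_mono ?_ h2
      rintro _ ⟨x, hx, rfl⟩
      exact Set.mem_prod.mpr ⟨Set.mem_insert_of_mem _ hx, Set.mem_insert _ _⟩
    have hh1 : (((1 : G), h) : G × H) ∈ Subgroup.closure (PZ X Y) := by
      have hhY : h ∈ Subgroup.closure Y := by rw [hYc]; trivial
      have h2 : (MonoidHom.inr G H) h ∈
          Subgroup.map (MonoidHom.inr G H) (Subgroup.closure Y) := ⟨h, hhY, rfl⟩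
      rw [MonoidHom.map_closure] at h2
      refine Subgroup.closure_mono ?_ h2
      rintro _ ⟨y, hy, rfl⟩
      exact Set.mem_prod.mpr ⟨Set.mem_insert _ _, Set.mem_insert_of_mem _ hy⟩
    have hgh : ((g, h) : G × H) = (g, 1) * (1, h) := by
      rw [Prod.mk_mul_mk, mul_one, one_mul]
    rw [hgh]
    exact mul_mem hg1 hh1
  · intro u v huv
    rw [geo_PZ_iff, geo_PZ_iff]
    exact or_congr
      (lt_insert X hk hXl _ _ (SimK.map_letter (pg X Y) huv))
      (lt_insert Y hk hYl _ _ (SimK.map_letter (ph X Y) huv))
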